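/- One has E_0 E*_d E_d E*_0 = (φ_1 φ_2 ⋯ φ_d / (τ_d(θ_d) τ*_d(θ*_d))) · E_0 E*_0, where τ_d(θ_d) = (θ_d−θ_0)⋯(θ_d−θ_{d−1}) and τ*_d(θ*_d) = (θ*_d−θ*_0)⋯(θ*_d−θ*_{d−1}) are nonzero since θ_0,…,θ_d are mutually distinct and θ*_0,…,θ*_d are mutually distinct. -/

import Mathlib

open Polynomial Matrix Finset

noncomputable section

/-- The lower bidiagonal matrix with diagonal entries `θ 0, …, θ d` and
subdiagonal entries `1`. -/
def matA {K : Type*} [Field K] (d : ℕ) (θ : ℕ → K) :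
    Matrix (Fin (d + 1)) (Fin (d + 1)) K :=
  Matrix.of fun i j =>
    if (i : ℕ) = (j : ℕ) then θ (i : ℕ)
    else if (i : ℕ) = (j : ℕ) + 1 then 1 else 0

/-- The upper bidiagonal matrix with diagonal entries `θs 0, …, θs d` and
superdiagonal entries `φ 1, …, φ d` (the `(i-1,i)`-entry is `φ i`). -/
def matAs {K : Type*} [Field K] (d : ℕ) (θs φ : ℕ → K) :
    Matrix (Fin (d + 1)) (Fin (d + 1)) K :=
  Matrix.of fun i j =>
    if (i : ℕ) = (j : ℕ) then θs (i : ℕ)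
    else if (j : ℕ) = (i : ℕ) + 1 then φ (j : ℕ) else 0

/-- The primitive idempotent `E_i = ∏_{j ≠ i} (M - θ_j I)/(θ_i - θ_j)` of a matrix `M`
with eigenvalues `θ 0, …, θ d`. -/
def primIdem {K : Type*} [Field K] (d : ℕ) (θ : ℕ → K)
    (M : Matrix (Fin (d + 1)) (Fin (d + 1)) K) (i : ℕ) :
    Matrix (Fin (d + 1)) (Fin (d + 1)) K :=
  Polynomial.aeval M (∏ j ∈ (Finset.range (d + 1)).erase i,
    (Polynomial.C ((θ i - θ j)⁻¹) * (Polynomial.X - Polynomial.C (θ j))))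

/-- `τ_i(λ) = (λ - θ_0)(λ - θ_1)⋯(λ - θ_{i-1})`. -/
def tauPoly {K : Type*} [Field K] (θ : ℕ → K) (i : ℕ) : Polynomial K :=
  ∏ k ∈ Finset.range i, (Polynomial.X - Polynomial.C (θ k))

/-- `η_i(λ) = (λ - θ_d)(λ - θ_{d-1})⋯(λ - θ_{d-i+1})`. -/
def etaPoly {K : Type*} [Field K] (d : ℕ) (θ : ℕ → K) (i : ℕ) : Polynomial K :=
  ∏ k ∈ Finset.range i, (Polynomial.X - Polynomial.C (θ (d - k)))

namespace EPAux
variable {K : Type*} [Field K]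

lemma matA_step_col {d : ℕ} (θ : ℕ → K) (s : ℕ) (hs : s ≤ d) :
    (matA d θ - θ s • 1) *ᵥ Pi.single (⟨s, by omega⟩ : Fin (d + 1)) (1 : K) =
      if h : s < d then Pi.single (⟨s + 1, by omega⟩ : Fin (d + 1)) (1 : K) else 0 := by
  funext i
  obtain ⟨i, hi⟩ := i
  by_cases h : s < d
  · rw [dif_pos h]
    simp only [mulVec_single_one, Matrix.col_apply, mul_one, Matrix.sub_apply, Matrix.smul_apply, Matrix.one_apply,
      Pi.single_apply, smul_eq_mul, matA, Matrix.of_apply, Fin.mk.injEq]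
    split_ifs <;> first | omega | (subst_vars; ring)
  · rw [dif_neg h]
    simp only [mulVec_single_one, Matrix.col_apply, mul_one, Matrix.sub_apply, Matrix.smul_apply, Matrix.one_apply,
      Pi.single_apply, smul_eq_mul, matA, Matrix.of_apply, Fin.mk.injEq, Pi.zero_apply]
    split_ifs <;> first | omega | (subst_vars; ring)

lemma matA_step_row {d : ℕ} (θ : ℕ → K) (s : ℕ) (hs : s ≤ d) :
    Pi.single (⟨s, by omega⟩ : Fin (d + 1)) (1 : K) ᵥ* (matA d θ - θ s • 1) =
      if h : 1 ≤ s then Pi.single (⟨s - 1, by omega⟩ : Fin (d + 1)) (1 : K) else 0 := by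
  funext j
  obtain ⟨j, hj⟩ := j
  by_cases h : 1 ≤ s
  · rw [dif_pos h]
    simp only [single_one_vecMul, Matrix.row_apply, one_mul, Matrix.sub_apply, Matrix.smul_apply, Matrix.one_apply,
      smul_eq_mul, matA, Matrix.of_apply, Fin.mk.injEq, Pi.single_apply]
    split_ifs <;> first | omega | (subst_vars; ring)
  · rw [dif_neg h]
    simp only [single_one_vecMul, Matrix.row_apply, one_mul, Matrix.sub_apply, Matrix.smul_apply, Matrix.one_apply,
      smul_eq_mul, matA, Matrix.of_apply, Fin.mk.injEq, Pi.zero_apply]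
    split_ifs <;> first | omega | (subst_vars; ring)

lemma matAs_step_row {d : ℕ} (θs φ : ℕ → K) (s : ℕ) (hs : s ≤ d) :
    Pi.single (⟨s, by omega⟩ : Fin (d + 1)) (1 : K) ᵥ* (matAs d θs φ - θs s • 1) =
      if h : s < d then
        φ (s + 1) • (Pi.single (⟨s + 1, by omega⟩ : Fin (d + 1)) (1 : K) : Fin (d + 1) → K)
      else 0 := by
  funext j
  obtain ⟨j, hj⟩ := j
  by_cases h : s < d
  · rw [dif_pos h]
    simp only [single_one_vecMul, Matrix.row_apply, one_mul, Matrix.sub_apply, Matrix.smul_apply, Matrix.one_apply,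
      smul_eq_mul, matAs, Matrix.of_apply, Fin.mk.injEq, Pi.single_apply, Pi.smul_apply,
      mul_ite, mul_one, mul_zero]
    split_ifs <;> first | omega | (subst_vars; ring)
  · rw [dif_neg h]
    simp only [single_one_vecMul, Matrix.row_apply, one_mul, Matrix.sub_apply, Matrix.smul_apply, Matrix.one_apply,
      smul_eq_mul, matAs, Matrix.of_apply, Fin.mk.injEq, Pi.zero_apply]
    split_ifs <;> first | omega | (subst_vars; ring)

/-- The monic polynomial with roots `θ j`, `j ∈ S`. -/
def PP (θ : ℕ → K) (S : Finset ℕ) : Polynomial K :=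
  ∏ j ∈ S, (Polynomial.X - Polynomial.C (θ j))

lemma aeval_lin {d : ℕ} (M : Matrix (Fin (d + 1)) (Fin (d + 1)) K) (b : K) :
    Polynomial.aeval M (X - C b) = M - b • 1 := by
  simp [Algebra.algebraMap_eq_smul_one]

lemma primIdem_eq {d : ℕ} (θ : ℕ → K) (M : Matrix (Fin (d + 1)) (Fin (d + 1)) K) (i : ℕ) :
    primIdem d θ M i = (∏ j ∈ (Finset.range (d + 1)).erase i, (θ i - θ j)⁻¹) •
      Polynomial.aeval M (PP θ ((Finset.range (d + 1)).erase i)) := by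
  rw [primIdem, PP, Finset.prod_mul_distrib, ← map_prod, _root_.map_mul, aeval_C,
    Algebra.algebraMap_eq_smul_one, smul_mul_assoc, one_mul]

lemma entry_row {n : ℕ} (M : Matrix (Fin n) (Fin n) K) (i j : Fin n) :
    M i j = (Pi.single i (1 : K) ᵥ* M) j := by simp [single_vecMul]

lemma entry_col {n : ℕ} (M : Matrix (Fin n) (Fin n) K) (i j : Fin n) :
    M i j = (M *ᵥ Pi.single j (1 : K)) i := by simp [mulVec_single]

lemma chainA_colup {d : ℕ} (θ : ℕ → K) :
    ∀ t, ∀ ht : t ≤ d,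
      (Polynomial.aeval (matA d θ) (PP θ (range t))) *ᵥ
          Pi.single (⟨0, by omega⟩ : Fin (d + 1)) (1 : K)
        = Pi.single (⟨t, by omega⟩ : Fin (d + 1)) (1 : K) := by
  intro t
  induction t with
  | zero => intro ht; simp [PP]; funext i; simp [Matrix.one_apply, Pi.single_apply]
  | succ t ih =>
    intro ht
    have h1 : PP θ (range (t + 1)) = (X - C (θ t)) * PP θ (range t) := by
      rw [PP, PP, range_add_one, prod_insert notMem_range_self]
    rw [h1, _root_.map_mul, aeval_lin, ← mulVec_mulVec, ih (by omega),
      matA_step_col θ t (by omega), dif_pos (by omega : t < d)]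

lemma chainA_colzero {d : ℕ} (θ : ℕ → K) :
    ∀ n s, ∀ h1 : 1 ≤ s, ∀ h2 : s + n = d,
      (Polynomial.aeval (matA d θ) (PP θ (Icc s d))) *ᵥ
        Pi.single (⟨s, by omega⟩ : Fin (d + 1)) (1 : K) = 0 := by
  intro n
  induction n with
  | zero =>
    intro s h1 h2
    have hsd : s = d := by omega
    subst hsd
    rw [show Icc s s = {s} from Icc_self s, PP, prod_singleton, aeval_lin,
      matA_step_col θ s (by omega), dif_neg (by omega)]
  | succ n ih =>
    intro s h1 h2
    have hins : Icc s d = insert s (Icc (s + 1) d) := by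
      ext x; simp only [mem_Icc, mem_insert]; omega
    have h1' : PP θ (Icc s d) = PP θ (Icc (s + 1) d) * (X - C (θ s)) := by
      rw [PP, hins, prod_insert (by simp [mem_Icc]), mul_comm, PP]
    rw [h1', _root_.map_mul, aeval_lin, ← mulVec_mulVec, matA_step_col θ s (by omega),
      dif_pos (by omega : s < d), ih (s + 1) (by omega) (by omega)]

lemma chainA_rowzero {d : ℕ} (θ : ℕ → K) :
    ∀ r, ∀ hr : r ≤ d,
      Pi.single (⟨r, by omega⟩ : Fin (d + 1)) (1 : K) ᵥ*
        (Polynomial.aeval (matA d θ) (PP θ (range (r + 1)))) = 0 := by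
  intro r
  induction r with
  | zero =>
    intro hr
    rw [show range 1 = {0} from rfl, PP, prod_singleton, aeval_lin,
      matA_step_row θ 0 (by omega), dif_neg (by omega)]
  | succ r ih =>
    intro hr
    have h1' : PP θ (range (r + 2)) = (X - C (θ (r + 1))) * PP θ (range (r + 1)) := by
      rw [PP, PP, range_add_one, prod_insert notMem_range_self]
    rw [h1', _root_.map_mul, aeval_lin, ← vecMul_vecMul, matA_step_row θ (r + 1) (by omega),
      dif_pos (by omega : 1 ≤ r + 1)]
    exact ih (by omega)

lemma chainAs_rowzero {d : ℕ} (θs φ : ℕ → K) :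
    ∀ n s, ∀ h1 : 1 ≤ s, ∀ h2 : s + n = d,
      Pi.single (⟨s, by omega⟩ : Fin (d + 1)) (1 : K) ᵥ*
        (Polynomial.aeval (matAs d θs φ) (PP θs (Icc s d))) = 0 := by
  intro n
  induction n with
  | zero =>
    intro s h1 h2
    have hsd : s = d := by omega
    subst hsd
    rw [show Icc s s = {s} from Icc_self s, PP, prod_singleton, aeval_lin,
      matAs_step_row θs φ s (by omega), dif_neg (by omega)]
  | succ n ih =>
    intro s h1 h2
    have hins : Icc s d = insert s (Icc (s + 1) d) := by
      ext x; simp only [mem_Icc, mem_insert]; omega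
    have h1' : PP θs (Icc s d) = (X - C (θs s)) * PP θs (Icc (s + 1) d) := by
      rw [PP, hins, prod_insert (by simp [mem_Icc]), PP]
    rw [h1', _root_.map_mul, aeval_lin, ← vecMul_vecMul, matAs_step_row θs φ s (by omega),
      dif_pos (by omega : s < d), smul_vecMul, ih (s + 1) (by omega) (by omega), smul_zero]

lemma chainAs_rowup {d : ℕ} (θs φ : ℕ → K) :
    ∀ t, ∀ ht : t ≤ d,
      Pi.single (⟨0, by omega⟩ : Fin (d + 1)) (1 : K) ᵥ*
          (Polynomial.aeval (matAs d θs φ) (PP θs (range t)))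
        = (∏ k ∈ Icc 1 t, φ k) •
            (Pi.single (⟨t, by omega⟩ : Fin (d + 1)) (1 : K) : Fin (d + 1) → K) := by
  intro t
  induction t with
  | zero =>
    intro ht
    rw [show Icc 1 0 = (∅ : Finset ℕ) from rfl, prod_empty, one_smul]
    simp [PP]
  | succ t ih =>
    intro ht
    have h1' : PP θs (range (t + 1)) = PP θs (range t) * (X - C (θs t)) := by
      rw [PP, PP, range_add_one, prod_insert notMem_range_self, mul_comm]
    have hIcc : Icc 1 (t + 1) = insert (t + 1) (Icc 1 t) := by
      ext x; simp only [mem_Icc, mem_insert]; omega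
    rw [h1', _root_.map_mul, aeval_lin, ← vecMul_vecMul, ih (by omega), smul_vecMul,
      matAs_step_row θs φ t (by omega), dif_pos (by omega : t < d), smul_smul,
      hIcc, prod_insert (by simp [mem_Icc]), mul_comm (φ (t + 1))]

end EPAux

namespace EPAux
variable {K : Type*} [Field K]

lemma Md_rowzero {d : ℕ} (θ : ℕ → K) (i j : Fin (d + 1)) (hi : (i : ℕ) ≠ d) :
    (Polynomial.aeval (matA d θ) (PP θ (range d))) i j = 0 := by
  obtain ⟨q, hq⟩ := i
  have hqd : q < d := by simp at hi; omega
  have hsub : range (q + 1) ⊆ range d := by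
    intro x hx; simp only [mem_range] at *; omega
  have hsplit : PP θ (range d) = PP θ (range (q + 1)) * PP θ (range d \ range (q + 1)) := by
    rw [PP, PP, PP, mul_comm, prod_sdiff hsub]
  rw [entry_row ((Polynomial.aeval (matA d θ)) (PP θ (range d))) ⟨q, hq⟩ j, hsplit,
    _root_.map_mul, ← vecMul_vecMul, chainA_rowzero θ q (by omega), zero_vecMul]
  simp

lemma M0_colzero {d : ℕ} (θ : ℕ → K) (i j : Fin (d + 1)) (hj : (j : ℕ) ≠ 0) :
    (Polynomial.aeval (matA d θ) (PP θ ((range (d + 1)).erase 0))) i j = 0 := by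
  obtain ⟨s, hs⟩ := j
  have hs1 : 1 ≤ s := by simp at hj; omega
  have hsub : Icc s d ⊆ (range (d + 1)).erase 0 := by
    intro x hx; simp only [mem_Icc, mem_erase, mem_range] at *; omega
  have hsplit : PP θ ((range (d + 1)).erase 0)
      = PP θ ((range (d + 1)).erase 0 \ Icc s d) * PP θ (Icc s d) := by
    rw [PP, PP, PP, prod_sdiff hsub]
  rw [entry_col ((Polynomial.aeval (matA d θ)) (PP θ ((range (d + 1)).erase 0))) i ⟨s, hs⟩,
    hsplit, _root_.map_mul, ← mulVec_mulVec,
    chainA_colzero θ (d - s) s (by omega) (by omega), mulVec_zero]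
  simp

lemma Ms0_rowzero {d : ℕ} (θs φ : ℕ → K) (i j : Fin (d + 1)) (hi : (i : ℕ) ≠ 0) :
    (Polynomial.aeval (matAs d θs φ) (PP θs ((range (d + 1)).erase 0))) i j = 0 := by
  obtain ⟨s, hs⟩ := i
  have hs1 : 1 ≤ s := by simp at hi; omega
  have hsub : Icc s d ⊆ (range (d + 1)).erase 0 := by
    intro x hx; simp only [mem_Icc, mem_erase, mem_range] at *; omega
  have hsplit : PP θs ((range (d + 1)).erase 0)
      = PP θs (Icc s d) * PP θs ((range (d + 1)).erase 0 \ Icc s d) := by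
    rw [PP, PP, PP, mul_comm, prod_sdiff hsub]
  rw [entry_row ((Polynomial.aeval (matAs d θs φ)) (PP θs ((range (d + 1)).erase 0))) ⟨s, hs⟩ j,
    hsplit, _root_.map_mul, ← vecMul_vecMul,
    chainAs_rowzero θs φ (d - s) s (by omega) (by omega), zero_vecMul]
  simp

lemma Md_entry {d : ℕ} (θ : ℕ → K) :
    (Polynomial.aeval (matA d θ) (PP θ (range d))) ⟨d, by omega⟩ ⟨0, by omega⟩ = 1 := by
  rw [entry_col ((Polynomial.aeval (matA d θ)) (PP θ (range d))) ⟨d, by omega⟩ ⟨0, by omega⟩,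
    chainA_colup θ d le_rfl]
  simp

lemma Msd_entry {d : ℕ} (θs φ : ℕ → K) :
    (Polynomial.aeval (matAs d θs φ) (PP θs (range d))) ⟨0, by omega⟩ ⟨d, by omega⟩
      = ∏ k ∈ Icc 1 d, φ k := by
  rw [entry_row ((Polynomial.aeval (matAs d θs φ)) (PP θs (range d))) ⟨0, by omega⟩ ⟨d, by omega⟩,
    chainAs_rowup θs φ d le_rfl]
  simp

lemma sandwich {n : ℕ} (U V W : Matrix (Fin n) (Fin n) K) (j0 : Fin n)
    (hU : ∀ i j, j ≠ j0 → U i j = 0) (hW : ∀ i j, i ≠ j0 → W i j = 0) :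
    U * V * W = V j0 j0 • (U * W) := by
  ext r s
  rw [Matrix.mul_apply, Matrix.smul_apply, Matrix.mul_apply, smul_eq_mul,
    Finset.sum_eq_single j0 (fun q _ hq => by rw [hW q s hq, mul_zero]) (by simp),
    Finset.sum_eq_single j0 (fun p _ hp => by rw [hW p s hp, mul_zero]) (by simp),
    Matrix.mul_apply,
    Finset.sum_eq_single j0 (fun p _ hp => by rw [hU r p hp, zero_mul]) (by simp)]
  ring

end EPAux

theorem EZero_EsD_ED_EsZero {K : Type*} [Field K] (d : ℕ) (θ θs φ : ℕ → K)
    (hθ : ∀ i ≤ d, ∀ j ≤ d, θ i = θ j → i = j)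
    (hθs : ∀ i ≤ d, ∀ j ≤ d, θs i = θs j → i = j)
    (hφ : ∀ i, 1 ≤ i → i ≤ d → φ i ≠ 0)
    (hE0 : ∀ i ≤ d, ∀ j ≤ d, 1 < |(i : ℤ) - (j : ℤ)| →
      primIdem d θ (matA d θ) i * matAs d θs φ * primIdem d θ (matA d θ) j = 0)
    (hE1 : ∀ i ≤ d, ∀ j ≤ d, |(i : ℤ) - (j : ℤ)| = 1 →
      primIdem d θ (matA d θ) i * matAs d θs φ * primIdem d θ (matA d θ) j ≠ 0)
    (hEs0 : ∀ i ≤ d, ∀ j ≤ d, 1 < |(i : ℤ) - (j : ℤ)| →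
      primIdem d θs (matAs d θs φ) i * matA d θ * primIdem d θs (matAs d θs φ) j = 0)
    (hEs1 : ∀ i ≤ d, ∀ j ≤ d, |(i : ℤ) - (j : ℤ)| = 1 →
      primIdem d θs (matAs d θs φ) i * matA d θ * primIdem d θs (matAs d θs φ) j ≠ 0) :
    primIdem d θ (matA d θ) 0 * primIdem d θs (matAs d θs φ) d * primIdem d θ (matA d θ) d * primIdem d θs (matAs d θs φ) 0 = ((∏ k ∈ Finset.Icc (1) (d), φ k) / ((tauPoly θ d).eval (θ d) * (tauPoly θs d).eval (θs d))) • (primIdem d θ (matA d θ) 0 * primIdem d θs (matAs d θs φ) 0) := by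
  have h0 : (0 : ℕ) < d + 1 := Nat.succ_pos d
  have hdd : d < d + 1 := Nat.lt_succ_self d
  have hSd : (Finset.range (d + 1)).erase d = Finset.range d := by
    rw [Finset.range_add_one, Finset.erase_insert Finset.notMem_range_self]
  rw [EPAux.primIdem_eq θ (matA d θ) 0, EPAux.primIdem_eq θs (matAs d θs φ) d,
    EPAux.primIdem_eq θ (matA d θ) d, EPAux.primIdem_eq θs (matAs d θs φ) 0, hSd]
  set B1 := Polynomial.aeval (matA d θ) (EPAux.PP θ ((Finset.range (d + 1)).erase 0)) with hB1
  set B2 := Polynomial.aeval (matAs d θs φ) (EPAux.PP θs (Finset.range d)) with hB2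
  set B3 := Polynomial.aeval (matA d θ) (EPAux.PP θ (Finset.range d)) with hB3
  set B4 := Polynomial.aeval (matAs d θs φ) (EPAux.PP θs ((Finset.range (d + 1)).erase 0))
    with hB4
  have hsand : B1 * B2 * B3 * B4 = ((B2 * B3) ⟨0, h0⟩ ⟨0, h0⟩) • (B1 * B4) := by
    rw [mul_assoc B1 B2 B3]
    exact EPAux.sandwich B1 (B2 * B3) B4 ⟨0, h0⟩
      (fun i j hj => EPAux.M0_colzero θ i j (fun h => hj (Fin.ext h)))
      (fun i j hi => EPAux.Ms0_rowzero θs φ i j (fun h => hi (Fin.ext h)))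
  have hV : (B2 * B3) ⟨0, h0⟩ ⟨0, h0⟩ = ∏ k ∈ Finset.Icc 1 d, φ k := by
    rw [hB2, hB3, Matrix.mul_apply, Finset.sum_eq_single (⟨d, hdd⟩ : Fin (d + 1))
      (fun q _ hq => by rw [EPAux.Md_rowzero θ q _ (fun h => hq (Fin.ext h)), mul_zero])
      (by simp), EPAux.Msd_entry, EPAux.Md_entry, mul_one]
  have hT : (tauPoly θ d).eval (θ d) = ∏ k ∈ Finset.range d, (θ d - θ k) := by
    simp [tauPoly, eval_prod]
  have hTs : (tauPoly θs d).eval (θs d) = ∏ k ∈ Finset.range d, (θs d - θs k) := by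
    simp [tauPoly, eval_prod]
  simp only [smul_mul_assoc, mul_smul_comm, smul_smul]
  rw [hsand, hV, smul_smul]
  congr 1
  rw [hT, hTs, div_eq_mul_inv, mul_inv, ← Finset.prod_inv_distrib, ← Finset.prod_inv_distrib]
  ring
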